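/- For all real numbers x, y > 0 and 0 < s < 1/2, one has α(x+2s, y+2s) ≤ α(x,y) · (xy/((x+y+1)(x+y)))^{2s}. -/

import Mathlib

open MeasureTheory Set
open scoped ENNReal

/-- `α(x,y) = ∫₀¹ t^{x-1} (1-t)^{y-1} dt`. -/
noncomputable def alpha (x y : ℝ) : ℝ :=
  ∫ t in (0:ℝ)..1, t ^ (x - 1) * (1 - t) ^ (y - 1)

lemma beta_eq_alpha {x y : ℝ} (hx : 0 < x) (hy : 0 < y) :
    Complex.betaIntegral x y = (alpha x y : ℂ) := by
  rw [alpha, ← intervalIntegral.integral_ofReal, Complex.betaIntegral]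
  refine intervalIntegral.integral_congr fun t ht => ?_
  rw [uIcc_of_le (by norm_num : (0:ℝ) ≤ 1)] at ht
  rw [Complex.ofReal_mul, Complex.ofReal_cpow ht.1, Complex.ofReal_cpow (by linarith [ht.2] : (0:ℝ) ≤ 1 - t)]
  push_cast
  ring

lemma alpha_eq_Gamma {x y : ℝ} (hx : 0 < x) (hy : 0 < y) :
    alpha x y = Real.Gamma x * Real.Gamma y / Real.Gamma (x + y) := by
  have h := Complex.Gamma_mul_Gamma_eq_betaIntegral
    (s := (x:ℂ)) (t := (y:ℂ)) (by simpa using hx) (by simpa using hy)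
  rw [beta_eq_alpha hx hy] at h
  have hG : Real.Gamma (x + y) ≠ 0 := (Real.Gamma_pos_of_pos (by linarith)).ne'
  have : (↑(Real.Gamma x * Real.Gamma y) : ℂ) = ↑(Real.Gamma (x + y) * alpha x y) := by
    rw [← Complex.ofReal_add, Complex.Gamma_ofReal, Complex.Gamma_ofReal, Complex.Gamma_ofReal] at h
    push_cast
    exact h
  have h2 := Complex.ofReal_injective this
  field_simp
  linarith [h2]

lemma alpha_pos {x y : ℝ} (hx : 0 < x) (hy : 0 < y) : 0 < alpha x y := by
  rw [alpha_eq_Gamma hx hy]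
  have := Real.Gamma_pos_of_pos hx
  have := Real.Gamma_pos_of_pos hy
  have := Real.Gamma_pos_of_pos (show (0:ℝ) < x + y by linarith)
  positivity

lemma alpha_rec {x y : ℝ} (hx : 0 < x) (hy : 0 < y) :
    alpha (x + 1) (y + 1) = alpha x y * (x * y / ((x + y + 1) * (x + y))) := by
  rw [alpha_eq_Gamma (by linarith) (by linarith), alpha_eq_Gamma hx hy,
    Real.Gamma_add_one hx.ne', Real.Gamma_add_one hy.ne',
    show x + 1 + (y + 1) = (x + y + 1) + 1 by ring,
    Real.Gamma_add_one (by positivity : (x+y+1:ℝ) ≠ 0),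
    show x + y + 1 = (x + y) + 1 by ring,
    Real.Gamma_add_one (by positivity : (x+y:ℝ) ≠ 0)]
  have h1 := (Real.Gamma_pos_of_pos (show (0:ℝ) < x + y by linarith)).ne'
  field_simp

lemma integrableOn_beta {x y : ℝ} (hx : 0 < x) (hy : 0 < y) :
    IntegrableOn (fun t : ℝ => t ^ (x - 1) * (1 - t) ^ (y - 1)) (Ioo 0 1) := by
  have h := (Complex.betaIntegral_convergent (u := (x:ℂ)) (v := (y:ℂ))
    (by simpa using hx) (by simpa using hy))
  have h2 : IntegrableOn (fun t : ℝ => (t:ℂ) ^ ((x:ℂ) - 1) * ((1:ℂ) - t) ^ ((y:ℂ) - 1))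
      (Ioo 0 1) := ((intervalIntegrable_iff_integrableOn_Ioc_of_le (by norm_num)).mp h).mono_set
      Ioo_subset_Ioc_self
  have h3 := h2.re
  refine h3.congr ((ae_restrict_iff' measurableSet_Ioo).mpr (ae_of_all _ fun t ht => ?_))
  have e : (t:ℂ) ^ ((x:ℂ) - 1) * ((1:ℂ) - t) ^ ((y:ℂ) - 1)
      = ((t ^ (x - 1) * (1 - t) ^ (y - 1) : ℝ) : ℂ) := by
    rw [Complex.ofReal_mul, Complex.ofReal_cpow ht.1.le,
      Complex.ofReal_cpow (by linarith [ht.2] : (0:ℝ) ≤ 1 - t)]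
    push_cast
    ring
  simp [e]

lemma alpha_Ioo (a b : ℝ) :
    alpha a b = ∫ t in Ioo (0:ℝ) 1, t ^ (a - 1) * (1 - t) ^ (b - 1) := by
  rw [alpha, intervalIntegral.integral_of_le zero_le_one, integral_Ioc_eq_integral_Ioo]

lemma alpha_holder {x y θ : ℝ} (hx : 0 < x) (hy : 0 < y) (h0 : 0 < θ) (h1 : θ < 1) :
    alpha (x + θ) (y + θ) ≤ alpha x y ^ (1 - θ) * alpha (x + 1) (y + 1) ^ θ := by
  set F : ℝ → ℝ≥0∞ := fun t => ENNReal.ofReal (t ^ (x - 1) * (1 - t) ^ (y - 1)) with hF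
  set G : ℝ → ℝ≥0∞ := fun t => ENNReal.ofReal (t ^ x * (1 - t) ^ y) with hG
  have hmF : Measurable F := by fun_prop
  have hmG : Measurable G := by fun_prop
  have hmh : Measurable (fun t : ℝ => t ^ (x + θ - 1) * (1 - t) ^ (y + θ - 1)) := by fun_prop
  -- step 1 : express LHS as a lintegral
  have step1 : alpha (x + θ) (y + θ)
      = (∫⁻ t in Ioo (0:ℝ) 1, F t ^ (1 - θ) * G t ^ θ).toReal := by
    rw [alpha_Ioo, integral_eq_lintegral_of_nonneg_ae
      ((ae_restrict_iff' measurableSet_Ioo).mpr (ae_of_all _ fun t ht => by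
        have h0t : (0:ℝ) < t := ht.1
        have : (0:ℝ) < 1 - t := by linarith [ht.2]
        positivity)) hmh.aestronglyMeasurable]
    congr 1
    refine setLIntegral_congr_fun measurableSet_Ioo (fun t ht => ?_)
    have ht0 : (0:ℝ) < t := ht.1
    have ht1 : (0:ℝ) < 1 - t := by linarith [ht.2]
    have key : t ^ (x + θ - 1) * (1 - t) ^ (y + θ - 1)
        = (t ^ (x - 1) * (1 - t) ^ (y - 1)) ^ (1 - θ) * (t ^ x * (1 - t) ^ y) ^ θ := by
      rw [Real.mul_rpow (by positivity) (by positivity),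
        Real.mul_rpow (by positivity) (by positivity),
        ← Real.rpow_mul ht0.le, ← Real.rpow_mul ht1.le,
        ← Real.rpow_mul ht0.le, ← Real.rpow_mul ht1.le,
        mul_mul_mul_comm, ← Real.rpow_add ht0, ← Real.rpow_add ht1]
      ring_nf
    rw [key, ENNReal.ofReal_mul (by positivity),
      ← ENNReal.ofReal_rpow_of_nonneg (by positivity) (by linarith),
      ← ENNReal.ofReal_rpow_of_nonneg (by positivity) h0.le]
  -- step 2 : Hölder
  have hpq : Real.HolderConjugate (1 / (1 - θ)) (1 / θ) := by
    exact Real.holderConjugate_one_div (by linarith) h0 (by ring)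
  have holder := ENNReal.lintegral_mul_le_Lp_mul_Lq (volume.restrict (Ioo (0:ℝ) 1)) hpq
    (f := fun t => F t ^ (1 - θ)) (g := fun t => G t ^ θ)
    (hmF.pow_const _).aemeasurable (hmG.pow_const _).aemeasurable
  have e1 : ∀ t, (F t ^ (1 - θ)) ^ (1 / (1 - θ)) = F t := fun t => by
    rw [← ENNReal.rpow_mul, mul_one_div, div_self (by linarith), ENNReal.rpow_one]
  have e2 : ∀ t, (G t ^ θ) ^ (1 / θ) = G t := fun t => by
    rw [← ENNReal.rpow_mul, mul_one_div, div_self h0.ne', ENNReal.rpow_one]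
  simp only [Pi.mul_apply, e1, e2, one_div_one_div] at holder
  -- step 3 : identify the Lp norms
  have hFint : ∫⁻ t in Ioo (0:ℝ) 1, F t = ENNReal.ofReal (alpha x y) := by
    rw [alpha_Ioo, ofReal_integral_eq_lintegral_ofReal (integrableOn_beta hx hy)
      ((ae_restrict_iff' measurableSet_Ioo).mpr (ae_of_all _ fun t ht => by
        have h0t : (0:ℝ) < t := ht.1
        have : (0:ℝ) < 1 - t := by linarith [ht.2]
        positivity))]
  have hGint : ∫⁻ t in Ioo (0:ℝ) 1, G t = ENNReal.ofReal (alpha (x + 1) (y + 1)) := by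
    rw [alpha_Ioo]
    have := integrableOn_beta (x := x + 1) (y := y + 1) (by linarith) (by linarith)
    simp only [add_sub_cancel_right] at this ⊢
    rw [ofReal_integral_eq_lintegral_ofReal this
      ((ae_restrict_iff' measurableSet_Ioo).mpr (ae_of_all _ fun t ht => by
        have h0t : (0:ℝ) < t := ht.1
        have : (0:ℝ) < 1 - t := by linarith [ht.2]
        positivity))]
  rw [hFint, hGint] at holder
  rw [step1]
  have hne : ENNReal.ofReal (alpha x y) ^ (1 - θ) * ENNReal.ofReal (alpha (x+1) (y+1)) ^ θ ≠ ⊤ := by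
    exact ENNReal.mul_ne_top (ENNReal.rpow_ne_top_of_nonneg (by linarith) ENNReal.ofReal_ne_top)
      (ENNReal.rpow_ne_top_of_nonneg h0.le ENNReal.ofReal_ne_top)
  calc (∫⁻ t in Ioo (0:ℝ) 1, F t ^ (1 - θ) * G t ^ θ).toReal
      ≤ (ENNReal.ofReal (alpha x y) ^ (1 - θ)
          * ENNReal.ofReal (alpha (x+1) (y+1)) ^ θ).toReal := ENNReal.toReal_mono hne holder
    _ = alpha x y ^ (1 - θ) * alpha (x + 1) (y + 1) ^ θ := by
        rw [ENNReal.toReal_mul, ← ENNReal.toReal_rpow, ← ENNReal.toReal_rpow,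
          ENNReal.toReal_ofReal (alpha_pos hx hy).le,
          ENNReal.toReal_ofReal (alpha_pos (by linarith) (by linarith)).le]

theorem alpha_positive_upper_bound (x y s : ℝ) (hx : 0 < x) (hy : 0 < y)
    (hs0 : 0 < s) (hs : s < 1 / 2) :
    alpha (x + 2 * s) (y + 2 * s) ≤
      alpha x y * (x * y / ((x + y + 1) * (x + y))) ^ (2 * s) := by
  have hθ0 : 0 < 2 * s := by linarith
  have hθ1 : 2 * s < 1 := by linarith
  have h := alpha_holder hx hy hθ0 hθ1
  rw [alpha_rec hx hy] at h
  have hA := alpha_pos hx hy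
  have hR : 0 < x * y / ((x + y + 1) * (x + y)) := by positivity
  calc alpha (x + 2 * s) (y + 2 * s)
      ≤ alpha x y ^ (1 - 2 * s) * (alpha x y * (x * y / ((x + y + 1) * (x + y)))) ^ (2 * s) := h
    _ = alpha x y * (x * y / ((x + y + 1) * (x + y))) ^ (2 * s) := by
        rw [Real.mul_rpow hA.le hR.le, ← mul_assoc, ← Real.rpow_add hA]
        norm_num
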